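/- arXiv:2501.13058 — 2 statements merged into one kernel-verified Lean document; each statement's English description precedes it below -/
import Mathlib

section
/- Suppose P_0,P_1,P_2,P_3 are points of ℝ³ and ℓ_0,ℓ_1,ℓ_2,ℓ_3 are nonzero vectors of ℝ³ with ℓ_i · ℓ_3 ≠ 0 for each i, and suppose there exists an isometry T of ℝ³ such that for each i, T(P_i) ≠ 0 and T(P_i) lies on the line spanned by ℓ_i. Define, using cyclic indexing on {0,1,2}: a_i = ‖P_j − P_k‖², c_i = ‖P_i − P_3‖², b_i = (ℓ_i·ℓ_i)(ℓ_3·ℓ_3)/(ℓ_i·ℓ_3)², and d_i = (ℓ_j·ℓ_k)(ℓ_3·ℓ_3)/((ℓ_j·ℓ_3)(ℓ_k·ℓ_3)). Then there exist nonzero real numbers z_0,z_1,z_2,z_3 such that the six incidence equations a_i = b_j z_j² + b_k z_k² − 2 d_i z_j z_k and c_i = z_3² + b_i z_i² − 2 z_i z_3 hold for i = 0,1,2. -/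
open scoped RealInnerProductSpace

/-- Three-dimensional Euclidean space. -/
abbrev E3 := EuclideanSpace ℝ (Fin 3)

/-- The inclusion `{0,1,2} ↪ {0,1,2,3}`. -/
def idx (i : Fin 3) : Fin 4 := ⟨i.1, by omega⟩

private lemma aux1 (tj tk Ijj Ikk Ijk Ij3 Ik3 I33 n3 : ℝ)
    (hn : n3 ^ 2 = I33) (hn0 : n3 ≠ 0) (hj : Ij3 ≠ 0) (hk : Ik3 ≠ 0) :
    tj ^ 2 * Ijj - 2 * (tj * tk) * Ijk + tk ^ 2 * Ikk =
      Ijj * I33 / Ij3 ^ 2 * (tj * Ij3 / n3) ^ 2 +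
        Ikk * I33 / Ik3 ^ 2 * (tk * Ik3 / n3) ^ 2 -
        2 * (Ijk * I33 / (Ij3 * Ik3)) * (tj * Ij3 / n3) * (tk * Ik3 / n3) := by
  subst hn; field_simp; ring

private lemma aux2 (ti t3 Iii Ii3 I33 n3 : ℝ)
    (hn : n3 ^ 2 = I33) (hn0 : n3 ≠ 0) (hi : Ii3 ≠ 0) :
    ti ^ 2 * Iii - 2 * (ti * t3) * Ii3 + t3 ^ 2 * I33 =
      (t3 * I33 / n3) ^ 2 + Iii * I33 / Ii3 ^ 2 * (ti * Ii3 / n3) ^ 2 -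
        2 * (ti * Ii3 / n3) * (t3 * I33 / n3) := by
  subst hn; field_simp; ring

theorem statement2 (P : Fin 4 → E3) (ℓ : Fin 4 → E3)
    (hne : ∀ i, ℓ i ≠ 0)
    (hdot : ∀ i, ⟪ℓ i, ℓ 3⟫ ≠ 0)
    (T : E3 ≃ᵢ E3)
    (hT : ∀ i, T (P i) ≠ 0 ∧ ∃ t : ℝ, T (P i) = t • ℓ i)
    (a c b d : Fin 3 → ℝ)
    (ha : ∀ i : Fin 3, a i = ‖P (idx (i + 1)) - P (idx (i + 2))‖ ^ 2)
    (hc : ∀ i : Fin 3, c i = ‖P (idx i) - P 3‖ ^ 2)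
    (hb : ∀ i : Fin 3,
      b i = (⟪ℓ (idx i), ℓ (idx i)⟫ * ⟪ℓ 3, ℓ 3⟫) / ⟪ℓ (idx i), ℓ 3⟫ ^ 2)
    (hd : ∀ i : Fin 3,
      d i = (⟪ℓ (idx (i + 1)), ℓ (idx (i + 2))⟫ * ⟪ℓ 3, ℓ 3⟫) /
        (⟪ℓ (idx (i + 1)), ℓ 3⟫ * ⟪ℓ (idx (i + 2)), ℓ 3⟫)) :
    ∃ z : Fin 4 → ℝ, (∀ i, z i ≠ 0) ∧ ∀ i : Fin 3,
      a i = b (i + 1) * z (idx (i + 1)) ^ 2 + b (i + 2) * z (idx (i + 2)) ^ 2 -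
          2 * d i * z (idx (i + 1)) * z (idx (i + 2)) ∧
      c i = z 3 ^ 2 + b i * z (idx i) ^ 2 - 2 * z (idx i) * z 3 := by
  choose hTne tt hTt using hT
  have ht : ∀ i, tt i ≠ 0 := fun i h => hTne i (by rw [hTt i, h, zero_smul])
  have hn3 : ‖ℓ 3‖ ≠ 0 := norm_ne_zero_iff.mpr (hne 3)
  have hs : ‖ℓ 3‖ ^ 2 = ⟪ℓ 3, ℓ 3⟫ := (real_inner_self_eq_norm_sq _).symm
  have key : ∀ x y : Fin 4, ‖P x - P y‖ ^ 2 =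
      tt x ^ 2 * ⟪ℓ x, ℓ x⟫ - 2 * (tt x * tt y) * ⟪ℓ x, ℓ y⟫
        + tt y ^ 2 * ⟪ℓ y, ℓ y⟫ := by
    intro x y
    have h1 : ‖P x - P y‖ = ‖T (P x) - T (P y)‖ := by
      rw [← dist_eq_norm, ← dist_eq_norm, T.isometry.dist_eq]
    rw [h1, hTt, hTt, ← real_inner_self_eq_norm_sq]
    simp only [inner_sub_left, inner_sub_right, real_inner_smul_left,
      real_inner_smul_right]
    rw [real_inner_comm (ℓ y) (ℓ x)]
    ring
  refine ⟨fun i => tt i * ⟪ℓ i, ℓ 3⟫ / ‖ℓ 3‖, fun i =>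
    div_ne_zero (mul_ne_zero (ht i) (hdot i)) hn3, fun i => ?_⟩
  simp only [ha, hb, hc, hd, key]
  exact ⟨aux1 _ _ _ _ _ _ _ _ _ hs hn3 (hdot _) (hdot _),
    aux2 _ _ _ _ _ _ hs hn3 (hdot _)⟩
end

section
/- Fix real numbers a_0,a_1,a_2,b_0,b_1,b_2,c_0,c_1,c_2,d_0,d_1,d_2. If (z_0,z_1,z_2,z_3) and (z'_0,z'_1,z'_2,z'_3) are two real quadruples both satisfying the six incidence equations for these fixed values, with z_i² = z'_i² for all i ∈ {0,1,2,3} and z_3 ≠ 0, then either z'_i = z_i for all i, or z'_i = −z_i for all i. -/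
theorem statement8 (a b c d : Fin 3 → ℝ) (z z' : Fin 4 → ℝ)
    (hz : ∀ i : Fin 3,
      a i = b (i + 1) * z (idx (i + 1)) ^ 2 + b (i + 2) * z (idx (i + 2)) ^ 2 -
          2 * d i * z (idx (i + 1)) * z (idx (i + 2)) ∧
      c i = z 3 ^ 2 + b i * z (idx i) ^ 2 - 2 * z (idx i) * z 3)
    (hz' : ∀ i : Fin 3,
      a i = b (i + 1) * z' (idx (i + 1)) ^ 2 + b (i + 2) * z' (idx (i + 2)) ^ 2 -
          2 * d i * z' (idx (i + 1)) * z' (idx (i + 2)) ∧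
      c i = z' 3 ^ 2 + b i * z' (idx i) ^ 2 - 2 * z' (idx i) * z' 3)
    (hsq : ∀ i : Fin 4, z i ^ 2 = z' i ^ 2)
    (h3 : z 3 ≠ 0) :
    (∀ i, z' i = z i) ∨ (∀ i, z' i = -z i) := by
  have key : ∀ i : Fin 3, z' (idx i) * z' 3 = z (idx i) * z 3 := by
    intro i
    have h1 := (hz i).2
    have h2 := (hz' i).2
    have h4 := hsq (idx i)
    have h5 := hsq 3
    have hb : b i * z (idx i) ^ 2 = b i * z' (idx i) ^ 2 := by rw [h4]
    linarith
  have h5 := hsq 3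
  have hsplit : ∀ i : Fin 4, i = 3 ∨ ∃ j : Fin 3, i = idx j := by
    intro i
    rcases i with ⟨v, hv⟩
    by_cases hv3 : v = 3
    · left; simp [hv3]
    · right; exact ⟨⟨v, by omega⟩, rfl⟩
  rcases sq_eq_sq_iff_eq_or_eq_neg.mp h5.symm with h | h
  · left
    intro i
    rcases hsplit i with rfl | ⟨j, rfl⟩
    · exact h
    · have hk := key j
      rw [h] at hk
      exact mul_right_cancel₀ h3 hk
  · right
    intro i
    rcases hsplit i with rfl | ⟨j, rfl⟩
    · exact h
    · have hk := key j
      rw [h] at hk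
      have : z' (idx j) * z 3 = -z (idx j) * z 3 := by linarith [hk]
      exact mul_right_cancel₀ h3 this
end
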